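/- Let m be a positive integer and r an integer, and for τ in the upper half-plane ℍ and z ∈ ℂ define the theta function θ_{m,r}(τ, z) = Σ_{ℓ ∈ ℤ, ℓ ≡ r (mod 2m)} exp(2πiτ ℓ²/(4m)) · exp(2πi z ℓ). Then for all τ ∈ ℍ and z ∈ ℂ, θ_{m,r}(−1/τ, z/τ) = √(−iτ) · exp(2πi m z²/τ) · (1/√(2m)) · Σ_{r' = 0}^{2m−1} exp(−2πi r r'/(2m)) · θ_{m,r'}(τ, z), where √(−iτ) denotes the principal branch of the square root (note −iτ has positive real part when τ ∈ ℍ). -/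

import Mathlib

open Complex


lemma cpow_half_ofReal_mul {c : ℝ} (hc : 0 < c) {x : ℂ} (hx : x ≠ 0) :
    ((c : ℂ) * x) ^ ((1:ℂ)/2) = (c : ℂ) ^ ((1:ℂ)/2) * x ^ ((1:ℂ)/2) := by
  have hc' : (c:ℂ) ≠ 0 := ofReal_ne_zero.mpr hc.ne'
  rw [cpow_def_of_ne_zero (mul_ne_zero hc' hx), cpow_def_of_ne_zero hc', cpow_def_of_ne_zero hx,
    Complex.log_ofReal_mul hc hx, add_mul, Complex.exp_add, Complex.ofReal_log hc.le]


/-- The index-`m` Jacobi theta function attached to the residue class `r mod 2m`: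
`θ_{m,r}(τ,z) = Σ_{ℓ ≡ r (2m)} q^{ℓ²/4m} y^ℓ`. -/
noncomputable def jacobiThetaMR (m : ℕ) (r : ℤ) (τ z : ℂ) : ℂ :=
  ∑' ℓ : ℤ, if (ℓ : ZMod (2 * m)) = (r : ZMod (2 * m)) then
      Complex.exp (2 * Real.pi * Complex.I * τ * (ℓ : ℂ) ^ 2 / (4 * m)) *
        Complex.exp (2 * Real.pi * Complex.I * z * (ℓ : ℂ))
    else 0

lemma jacobiThetaMR_eq (m : ℕ) (hm : 0 < m) (r : ℤ) (τ z : ℂ) :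
    jacobiThetaMR m r τ z =
    Complex.exp (2 * Real.pi * Complex.I * τ * (r : ℂ) ^ 2 / (4 * m)
        + 2 * Real.pi * Complex.I * z * r) *
      jacobiTheta₂ ((r : ℂ) * τ + 2 * m * z) (2 * m * τ) := by
  rw [jacobiThetaMR]
  have hm' : (m : ℂ) ≠ 0 := Nat.cast_ne_zero.mpr hm.ne'
  have hinj : Function.Injective (fun n : ℤ => r + 2 * m * n) := by
    intro a b h
    simp only [add_right_inj] at h
    exact mul_left_cancel₀ (by exact_mod_cast (by omega : (2 * (m:ℤ)) ≠ 0)) h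
  have hsupp : Function.support (fun ℓ : ℤ => if (ℓ : ZMod (2 * m)) = (r : ZMod (2 * m)) then
      Complex.exp (2 * Real.pi * Complex.I * τ * (ℓ : ℂ) ^ 2 / (4 * m)) *
        Complex.exp (2 * Real.pi * Complex.I * z * (ℓ : ℂ)) else 0)
      ⊆ Set.range (fun n : ℤ => r + 2 * m * n) := by
    intro ℓ hℓ
    simp only [Function.mem_support, ne_eq, ite_eq_right_iff, not_forall] at hℓ
    obtain ⟨hc, -⟩ := hℓ
    rw [ZMod.intCast_eq_intCast_iff] at hc
    obtain ⟨k, hk⟩ := hc.dvd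
    exact ⟨-k, by push_cast at hk ⊢; linarith⟩
  rw [jacobiTheta₂, ← hinj.tsum_eq hsupp, ← tsum_mul_left]
  congr 1 with n
  have hcond : (((r + 2 * m * n : ℤ)) : ZMod (2 * m)) = (r : ZMod (2 * m)) := by
    have h0 : ((2 * m : ℕ) : ZMod (2 * m)) = 0 := ZMod.natCast_self _
    push_cast at h0 ⊢
    rw [h0, zero_mul, add_zero]
  simp only [if_pos hcond, jacobiTheta₂_term, ← Complex.exp_add]
  congr 1
  push_cast
  field_simp
  ring

lemma jacobiThetaMR_sum_eq (m : ℕ) (hm : 0 < m) (r : ℤ) (τ z : ℂ) (hτ : 0 < τ.im) :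
    ∑ r' ∈ Finset.range (2 * m),
        Complex.exp (-(2 * Real.pi * Complex.I * r * r') / (2 * m)) *
          jacobiThetaMR m (r' : ℤ) τ z =
      jacobiTheta₂ (z - r / (2 * m)) (τ / (2 * m)) := by
  haveI : NeZero (2 * m) := ⟨by omega⟩
  have hm' : (m : ℂ) ≠ 0 := Nat.cast_ne_zero.mpr hm.ne'
  have h2m : ((2 * m : ℕ) : ℝ) > 0 := by positivity
  have hσ : 0 < (τ / (2 * m) : ℂ).im := by
    rw [show ((2 * m : ℂ)) = (((2 * m : ℕ) : ℝ) : ℂ) by push_cast; ring, div_ofReal_im]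
    positivity
  have hterm : ∀ ℓ : ℤ,
      Complex.exp (2 * Real.pi * Complex.I * τ * (ℓ : ℂ) ^ 2 / (4 * m)) *
        Complex.exp (2 * Real.pi * Complex.I * z * (ℓ : ℂ)) =
      jacobiTheta₂_term ℓ z (τ / (2 * m)) := by
    intro ℓ
    rw [jacobiTheta₂_term, ← Complex.exp_add]
    congr 1
    field_simp
    ring
  -- the double-indexed function
  set g : ℕ → ℤ → ℂ := fun r' ℓ =>
    if (ℓ : ZMod (2 * m)) = ((r' : ℤ) : ZMod (2 * m)) then
      Complex.exp (-(2 * Real.pi * Complex.I * r * r') / (2 * m)) *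
        jacobiTheta₂_term ℓ z (τ / (2 * m))
    else 0 with hg
  have hsummand : ∀ r' ∈ Finset.range (2 * m),
      Complex.exp (-(2 * Real.pi * Complex.I * r * r') / (2 * m)) *
        jacobiThetaMR m (r' : ℤ) τ z = ∑' ℓ : ℤ, g r' ℓ := by
    intro r' _
    rw [jacobiThetaMR, ← tsum_mul_left]
    congr 1 with ℓ
    simp only [hg]
    by_cases hc : (ℓ : ZMod (2 * m)) = ((r' : ℤ) : ZMod (2 * m))
    · simp only [if_pos hc, hterm ℓ]
    · simp only [if_neg hc, mul_zero]
  have hsum : ∀ r' ∈ Finset.range (2 * m), Summable (g r') := by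
    intro r' _
    apply Summable.of_norm_bounded (g :=
      (fun ℓ : ℤ => ‖Complex.exp (-(2 * Real.pi * Complex.I * r * r') / (2 * m)) *
        jacobiTheta₂_term ℓ z (τ / (2 * m))‖))
      (((summable_jacobiTheta₂_term_iff z _).mpr hσ).mul_left _).norm
    intro ℓ
    simp only [hg]
    split
    · exact le_rfl
    · simp [norm_nonneg]
  calc ∑ r' ∈ Finset.range (2 * m),
        Complex.exp (-(2 * Real.pi * Complex.I * r * r') / (2 * m)) *
          jacobiThetaMR m (r' : ℤ) τ z
      = ∑ r' ∈ Finset.range (2 * m), ∑' ℓ : ℤ, g r' ℓ := Finset.sum_congr rfl hsummand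
    _ = ∑' ℓ : ℤ, ∑ r' ∈ Finset.range (2 * m), g r' ℓ := (Summable.tsum_finsetSum hsum).symm
    _ = jacobiTheta₂ (z - r / (2 * m)) (τ / (2 * m)) := by
        rw [jacobiTheta₂]
        congr 1 with ℓ
        set v : ℕ := (ℓ : ZMod (2 * m)).val with hv
        have hvmem : v ∈ Finset.range (2 * m) := Finset.mem_range.mpr (ZMod.val_lt _)
        have hvcast : ((v : ℤ) : ZMod (2 * m)) = (ℓ : ZMod (2 * m)) := by
          push_cast
          rw [hv, ZMod.natCast_val, ZMod.cast_id]
        rw [Finset.sum_eq_single v]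
        · -- the value at v
          simp only [hg, if_pos hvcast.symm]
          -- use ℓ ≡ v mod 2m
          have hdvd : ((2 * m : ℕ) : ℤ) ∣ (v : ℤ) - ℓ := by
            rw [← ZMod.intCast_zmod_eq_zero_iff_dvd]
            push_cast
            push_cast at hvcast
            rw [hvcast]
            ring
          obtain ⟨k, hk⟩ := hdvd
          have hkc : ((v : ℤ) : ℂ) = (ℓ : ℂ) + 2 * m * k := by
            have := congrArg (fun x : ℤ => (x : ℂ)) hk
            push_cast at this ⊢
            linear_combination this
          rw [jacobiTheta₂_term, jacobiTheta₂_term, ← Complex.exp_add]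
          have : -(2 * ↑Real.pi * I * ↑r * ↑v) / (2 * ↑m) +
              (2 * ↑Real.pi * I * ↑ℓ * z + ↑Real.pi * I * ↑ℓ ^ 2 * (τ / (2 * ↑m))) =
              (2 * ↑Real.pi * I * ↑ℓ * (z - ↑r / (2 * ↑m)) +
                ↑Real.pi * I * ↑ℓ ^ 2 * (τ / (2 * ↑m))) + (-(r * k)) * (2 * Real.pi * I) := by
            have hkc' : (v : ℂ) = (ℓ : ℂ) + 2 * m * k := by exact_mod_cast hkc
            rw [hkc']
            field_simp
            ring
          rw [this, Complex.exp_add]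
          rw [show ((-(r * k) : ℂ)) * (2 * (Real.pi:ℂ) * I) = ((-(r*k) : ℤ) : ℂ) * (2 * (Real.pi:ℝ) * I) by push_cast; ring,
            Complex.exp_int_mul_two_pi_mul_I, mul_one]
        · intro b hb hbne
          simp only [hg]
          rw [if_neg]
          intro hc
          apply hbne
          have : ((b : ℤ) : ZMod (2 * m)) = ((b : ℕ) : ZMod (2 * m)) := by push_cast; rfl
          rw [this] at hc
          have hbval : ((b : ℕ) : ZMod (2 * m)).val = b := ZMod.val_cast_of_lt (Finset.mem_range.mp hb)
          rw [hv, hc, hbval]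
        · intro hv'
          exact absurd hvmem hv'

/-- the S-transformation of the vector-valued theta functions
realizing the index-`m` Weil representation. -/
theorem jacobiThetaMR_S_transform (m : ℕ) (hm : 0 < m) (r : ℤ) (τ z : ℂ)
    (hτ : 0 < τ.im) :
    jacobiThetaMR m r (-1 / τ) (z / τ) =
      (-Complex.I * τ) ^ ((1 : ℂ) / 2) *
        Complex.exp (2 * Real.pi * Complex.I * m * z ^ 2 / τ) *
        ((1 : ℂ) / Real.sqrt (2 * m)) *
        ∑ r' ∈ Finset.range (2 * m),
          Complex.exp (-(2 * Real.pi * Complex.I * r * r') / (2 * m)) *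
            jacobiThetaMR m (r' : ℤ) τ z := by
  have hm' : (m : ℂ) ≠ 0 := Nat.cast_ne_zero.mpr hm.ne'
  have hτ0 : τ ≠ 0 := by intro h; rw [h] at hτ; simp at hτ
  have hIτ : -I * τ ≠ 0 := mul_ne_zero (neg_ne_zero.mpr I_ne_zero) hτ0
  set σ : ℂ := τ / (2 * m) with hσdef
  set w : ℂ := z - r / (2 * m) with hwdef
  have hσ0 : σ ≠ 0 := div_ne_zero hτ0 (by simp [hm'])
  rw [jacobiThetaMR_eq m hm r (-1/τ) (z/τ), jacobiThetaMR_sum_eq m hm r τ z hτ]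
  have harg1 : (r : ℂ) * (-1/τ) + 2 * m * (z/τ) = w / σ := by
    rw [hwdef, hσdef]; field_simp; ring
  have harg2 : 2 * (m:ℂ) * (-1/τ) = -1 / σ := by
    rw [hσdef]; field_simp
  rw [harg1, harg2, jacobiTheta₂_functional_equation w σ]
  -- split the power
  have hsplit : (-I * σ) ^ ((1:ℂ)/2) =
      (((2 * (m:ℝ))⁻¹ : ℝ) : ℂ) ^ ((1:ℂ)/2) * (-I * τ) ^ ((1:ℂ)/2) := by
    rw [show -I * σ = (((2 * (m:ℝ))⁻¹ : ℝ) : ℂ) * (-I * τ) by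
      rw [hσdef]; push_cast; field_simp]
    exact cpow_half_ofReal_mul (by positivity) hIτ
  have hval : (((2 * (m:ℝ))⁻¹ : ℝ) : ℂ) ^ ((1:ℂ)/2) = ((Real.sqrt (2 * m) : ℝ) : ℂ)⁻¹ := by
    rw [show ((1:ℂ)/2) = (((1:ℝ)/2 : ℝ) : ℂ) by norm_num, ← Complex.ofReal_cpow (by positivity),
      ← Real.sqrt_eq_rpow, Real.sqrt_inv, ofReal_inv]
  have hs0 : ((Real.sqrt (2 * m) : ℝ) : ℂ) ≠ 0 := by
    simp only [ne_eq, ofReal_eq_zero]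
    positivity
  have hp0 : (-I * τ) ^ ((1:ℂ)/2) ≠ 0 := by
    rw [Ne, Complex.cpow_eq_zero_iff]
    simp [hIτ, hτ0, I_ne_zero]
  have hS : cexp (2 * Real.pi * I * (-1/τ) * (r:ℂ)^2 / (4*m) + 2 * Real.pi * I * (z/τ) * r) =
      (-I * τ) ^ ((1:ℂ)/2) * cexp (2 * Real.pi * I * m * z^2 / τ) *
        ((1:ℂ) / (Real.sqrt (2 * m) : ℝ)) *
        (1 / (-I * σ) ^ ((1:ℂ)/2) * cexp (-(Real.pi) * I * w^2 / σ)) := by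
    rw [hsplit, hval]
    have hexp : 2 * Real.pi * I * (-1/τ) * (r:ℂ)^2 / (4*m) + 2 * Real.pi * I * (z/τ) * r =
        2 * Real.pi * I * m * z^2 / τ + (-(Real.pi) * I * w^2 / σ) := by
      rw [hwdef, hσdef]; field_simp; ring
    rw [hexp, Complex.exp_add]
    have hrhs : ∀ (p s a b : ℂ), p ≠ 0 → s ≠ 0 →
        p * a * ((1:ℂ)/s) * (1/(s⁻¹ * p) * b) = a * b := by
      intro p s a b hp hs
      field_simp
    exact (hrhs _ _ _ _ hp0 hs0).symm
  linear_combination hS * jacobiTheta₂ (w / σ) (-1 / σ)
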